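/- Let A, B be n×n matrices over the tropical semiring T = ℝ ∪ {-∞}. If A = PBQ with P, Q ∈ M_n(T̄) where T̄ = ℝ ∪ {-∞, +∞}, then A = P'BQ' where P', Q' are obtained from P, Q by replacing every +∞ entry with 0. Consequently A ≤_J B in M_n(T) if and only if A ≤_J B in M_n(T̄). -/

import Mathlib

/-- Tropical (max-plus) matrix multiplication: `(X ⊗ Y)_{ij} = max_k (X_{ik} + Y_{kj})`.
Over `EReal` the additive convention `(-∞) + (+∞) = -∞` holds. -/
def tropMul {S : Type*} [SemilatticeSup S] [Add S] {n : ℕ} [NeZero n]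
    (X Y : Matrix (Fin n) (Fin n) S) : Matrix (Fin n) (Fin n) S :=
  fun i j => Finset.univ.sup' Finset.univ_nonempty fun k => X i k + Y k j

/-- Green's `J`-order: `A ≤_J B` iff `A ∈ M¹ B M¹`. -/
def JleGen {M : Type*} (mul : M → M → M) (A B : M) : Prop :=
  A = B ∨ (∃ P, A = mul P B) ∨ (∃ Q, A = mul B Q) ∨ ∃ P Q, A = mul (mul P B) Q

/-- Embed `T = ℝ ∪ {-∞} = WithBot ℝ` into `T̄ = EReal`. -/
noncomputable def botToE : WithBot ℝ → EReal := WithBot.recBotCoe ⊥ (fun r => (r : EReal))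

/-- Entrywise embedding of matrices over `T` into matrices over `T̄`. -/
noncomputable def botToEMat {n : ℕ} (A : Matrix (Fin n) (Fin n) (WithBot ℝ)) :
    Matrix (Fin n) (Fin n) EReal := fun i j => botToE (A i j)

open Classical in
/-- Replace a `+∞` entry by `0`, leaving all other entries unchanged. -/
noncomputable def replaceTop (a : EReal) : EReal := if a = ⊤ then 0 else a

-- basic lemmas
lemma botToE_ne_top (x : WithBot ℝ) : botToE x ≠ ⊤ := by
  cases x <;> simp [botToE]

lemma botToE_inj : Function.Injective botToE := by
  intro x y h
  cases x <;> cases y <;> simp_all [botToE]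

lemma botToE_add (x y : WithBot ℝ) : botToE (x + y) = botToE x + botToE y := by
  cases x <;> cases y <;> simp [botToE]
  rfl

lemma botToE_mono : Monotone botToE := by
  intro x y h
  cases x <;> cases y <;> simp_all [botToE]

lemma botToE_sup (x y : WithBot ℝ) : botToE (x ⊔ y) = botToE x ⊔ botToE y :=
  botToE_mono.map_sup x y

lemma replaceTop_le (a : EReal) : replaceTop a ≤ a := by
  unfold replaceTop; split <;> simp_all

lemma replaceTop_ne_top (a : EReal) : replaceTop a ≠ ⊤ := by
  unfold replaceTop; split <;> simp_all

lemma replaceTop_of_ne_top {a : EReal} (h : a ≠ ⊤) : replaceTop a = a := if_neg h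

open Finset in
lemma botToEMat_mul {n : ℕ} [NeZero n] (X Y : Matrix (Fin n) (Fin n) (WithBot ℝ)) :
    botToEMat (tropMul X Y) = tropMul (botToEMat X) (botToEMat Y) := by
  funext i j
  show botToE (Finset.univ.sup' Finset.univ_nonempty fun k => X i k + Y k j) = _
  rw [Finset.comp_sup'_eq_sup'_comp _ botToE botToE_sup]
  exact Finset.sup'_congr _ rfl (fun k _ => botToE_add _ _)

lemma botToEMat_inj {n : ℕ} : Function.Injective (botToEMat (n := n)) := by
  intro X Y h
  funext i j
  exact botToE_inj (congrFun (congrFun h i) j)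

noncomputable def idE (n : ℕ) : Matrix (Fin n) (Fin n) EReal :=
  fun i j => if i = j then 0 else ⊥

noncomputable def idT (n : ℕ) : Matrix (Fin n) (Fin n) (WithBot ℝ) :=
  fun i j => if i = j then 0 else ⊥

lemma botToEMat_idT (n : ℕ) : botToEMat (idT n) = idE n := by
  funext i j
  simp only [botToEMat, idT, idE]
  split <;> rfl

lemma tropMul_idE_right {n : ℕ} [NeZero n] (X : Matrix (Fin n) (Fin n) EReal) :
    tropMul X (idE n) = X := by
  funext i j
  apply le_antisymm
  · apply Finset.sup'_le
    intro k _
    by_cases h : k = j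
    · subst h; simp [idE]
    · simp [idE, h]
  · have := Finset.le_sup' (f := fun k => X i k + idE n k j) (Finset.mem_univ j)
    simpa only [tropMul, idE, eq_self_iff_true, if_true, add_zero] using this

lemma tropMul_idE_left {n : ℕ} [NeZero n] (X : Matrix (Fin n) (Fin n) EReal) :
    tropMul (idE n) X = X := by
  funext i j
  apply le_antisymm
  · apply Finset.sup'_le
    intro k _
    by_cases h : i = k
    · subst h; simp [idE]
    · simp [idE, h]
  · have := Finset.le_sup' (f := fun k => idE n i k + X k j) (Finset.mem_univ i)
    simpa only [tropMul, idE, eq_self_iff_true, if_true, zero_add] using this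

open Finset in
lemma keyRepl {n : ℕ} [NeZero n] (A B : Matrix (Fin n) (Fin n) (WithBot ℝ))
    (P Q : Matrix (Fin n) (Fin n) EReal)
    (h : botToEMat A = tropMul (tropMul P (botToEMat B)) Q) :
    botToEMat A = tropMul (tropMul (fun i j => replaceTop (P i j)) (botToEMat B))
      (fun i j => replaceTop (Q i j)) := by
  set Bb := botToEMat B with hBb
  set C : Matrix (Fin n) (Fin n) EReal := tropMul P Bb with hC
  set C' : Matrix (Fin n) (Fin n) EReal :=
    tropMul (fun i j => replaceTop (P i j)) Bb with hC'
  have hC'le : ∀ i l, C' i l ≤ C i l := by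
    intro i l
    apply Finset.sup'_le
    intro k _
    exact le_trans (add_le_add_left (replaceTop_le _) _)
      (Finset.le_sup' (fun k => P i k + Bb k l) (mem_univ k))
  have hL1 : ∀ i l, C i l ≠ ⊤ → C' i l = C i l := by
    intro i l hne
    apply Finset.sup'_congr _ rfl
    intro k _
    by_cases hP : P i k = ⊤
    · have hterm : P i k + Bb k l ≤ C i l :=
        Finset.le_sup' (fun k => P i k + Bb k l) (mem_univ k)
    -- show replaceTop (P i k) + Bb k l = P i k + Bb k l
      by_cases hB : Bb k l = ⊥
      · show replaceTop (P i k) + Bb k l = P i k + Bb k l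
        rw [hB, EReal.add_bot, EReal.add_bot]
      · exfalso
        apply hne
        refine top_le_iff.mp ?_
        calc (⊤ : EReal) = P i k + Bb k l := by rw [hP, EReal.top_add_of_ne_bot hB]
          _ ≤ C i l := hterm
    · show replaceTop (P i k) + Bb k l = P i k + Bb k l
      rw [replaceTop_of_ne_top hP]
  funext i j
  have hAij : botToE (A i j) =
      Finset.univ.sup' Finset.univ_nonempty (fun l => C i l + Q l j) :=
    congrFun (congrFun h i) j
  have hAtop : botToE (A i j) ≠ ⊤ := botToE_ne_top _
  show botToE (A i j) =
    Finset.univ.sup' Finset.univ_nonempty (fun l => C' i l + replaceTop (Q l j))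
  apply le_antisymm
  · rw [hAij]
    apply Finset.sup'_le
    intro l _
    have hterm : C i l + Q l j ≤ botToE (A i j) := by
      rw [hAij]; exact Finset.le_sup' (fun l => C i l + Q l j) (mem_univ l)
    by_cases hQb : Q l j = ⊥
    · rw [hQb, EReal.add_bot]; exact bot_le
    by_cases hQt : Q l j = ⊤
    · have hCb : C i l = ⊥ := by
        by_contra hCb
        exact hAtop (top_le_iff.mp (le_trans (le_of_eq (by rw [hQt, EReal.add_top_of_ne_bot hCb])) hterm))
      rw [hCb, EReal.bot_add]; exact bot_le
    · have hCt : C i l ≠ ⊤ := by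
        intro hCt
        exact hAtop (top_le_iff.mp (le_trans (le_of_eq (by rw [hCt, EReal.top_add_of_ne_bot hQb])) hterm))
      rw [← hL1 i l hCt, ← replaceTop_of_ne_top hQt]
      exact Finset.le_sup' (fun l => C' i l + replaceTop (Q l j)) (mem_univ l)
  · apply Finset.sup'_le
    intro l _
    refine le_trans (add_le_add (hC'le i l) (replaceTop_le _)) ?_
    rw [hAij]
    exact Finset.le_sup' (fun l => C i l + Q l j) (mem_univ l)

noncomputable def eToBot (x : EReal) : WithBot ℝ :=
  if x = ⊥ then ⊥ else (x.toReal : WithBot ℝ)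

lemma botToE_eToBot {x : EReal} (hx : x ≠ ⊤) : botToE (eToBot x) = x := by
  induction x using EReal.rec with
  | bot => simp [eToBot, botToE]
  | coe r => simp [eToBot, botToE]
  | top => exact absurd rfl hx

/-- Lift an `EReal` matrix with no `⊤` entries back to `WithBot ℝ`. -/
noncomputable def eToBotMat {n : ℕ} (X : Matrix (Fin n) (Fin n) EReal) :
    Matrix (Fin n) (Fin n) (WithBot ℝ) := fun i j => eToBot (X i j)

lemma botToEMat_eToBotMat {n : ℕ} {X : Matrix (Fin n) (Fin n) EReal}
    (hX : ∀ i j, X i j ≠ ⊤) : botToEMat (eToBotMat X) = X := by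
  funext i j
  exact botToE_eToBot (hX i j)


/-- If `A, B` are over `T = ℝ ∪ {-∞}` and `A = P B Q` with `P, Q` over
`T̄ = ℝ ∪ {±∞}`, then `A = P' B Q'` where `P', Q'` are obtained by replacing
every `+∞` entry of `P, Q` by `0`.  Consequently `A ≤_J B` in `M_n(T)` iff
`A ≤_J B` in `M_n(T̄)`. -/
theorem stmt9 {n : ℕ} [NeZero n] (A B : Matrix (Fin n) (Fin n) (WithBot ℝ)) :
    (∀ P Q : Matrix (Fin n) (Fin n) EReal,
        botToEMat A = tropMul (tropMul P (botToEMat B)) Q →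
        botToEMat A =
          tropMul (tropMul (fun i j => replaceTop (P i j)) (botToEMat B))
            (fun i j => replaceTop (Q i j))) ∧
      (JleGen tropMul A B ↔ JleGen tropMul (botToEMat A) (botToEMat B)) := by


  refine ⟨keyRepl A B, ?_, ?_⟩
  · -- forward
    rintro (h | ⟨P, h⟩ | ⟨Q, h⟩ | ⟨P, Q, h⟩)
    · exact Or.inl (by rw [h])
    · exact Or.inr (Or.inl ⟨botToEMat P, by rw [h, botToEMat_mul]⟩)
    · exact Or.inr (Or.inr (Or.inl ⟨botToEMat Q, by rw [h, botToEMat_mul]⟩))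
    · exact Or.inr (Or.inr (Or.inr ⟨botToEMat P, botToEMat Q, by
        rw [h, botToEMat_mul, botToEMat_mul]⟩))
  · -- backward
    intro hJ
    -- first turn every nontrivial case into a two-sided factorization over EReal
    have htwo : A = B ∨ ∃ P Q : Matrix (Fin n) (Fin n) EReal,
        botToEMat A = tropMul (tropMul P (botToEMat B)) Q := by
      rcases hJ with h | ⟨P, h⟩ | ⟨Q, h⟩ | ⟨P, Q, h⟩
      · exact Or.inl (botToEMat_inj h)
      · exact Or.inr ⟨P, idE n, by rw [tropMul_idE_right, h]⟩
      · exact Or.inr ⟨idE n, Q, by rw [tropMul_idE_left, h]⟩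
      · exact Or.inr ⟨P, Q, h⟩
    rcases htwo with h | ⟨P, Q, h⟩
    · exact Or.inl h
    · have h' := keyRepl A B P Q h
      set P' : Matrix (Fin n) (Fin n) EReal := fun i j => replaceTop (P i j) with hP'
      set Q' : Matrix (Fin n) (Fin n) EReal := fun i j => replaceTop (Q i j) with hQ'
      have hPt : ∀ i j, P' i j ≠ ⊤ := fun i j => replaceTop_ne_top _
      have hQt : ∀ i j, Q' i j ≠ ⊤ := fun i j => replaceTop_ne_top _
      refine Or.inr (Or.inr (Or.inr ⟨eToBotMat P', eToBotMat Q', ?_⟩))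
      apply botToEMat_inj
      rw [botToEMat_mul, botToEMat_mul, botToEMat_eToBotMat hPt, botToEMat_eToBotMat hQt]
      exact h'
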